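/- Let λ ∈ ℂⁿ be constant on each block, let σ be an admissible permutation, and let j ∈ {1,…,n} with j ∉ σ({m_1,…,m_k}). Then (id⊗ϖ)(M̂^{σ·λ}_j) = 0, where M̂^{σ·λ}_j is the U_q(gl_n)-submodule of ℂⁿ ⊗ M̂_{σ·λ} generated by the singular vector û_j formed from the weight σ·λ. -/

import Mathlib

noncomputable section

namespace QGL

/-! ### q-numbers.  Throughout, `q = exp ħ` and `q^z = exp (ħ z)` for `z : ℂ`. -/

/-- `q = exp ħ`. -/
def qh (h : ℂ) : ℂ := Complex.exp h

/-- `q^z = exp (ħ z)` for a complex exponent `z`. -/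
def qz (h z : ℂ) : ℂ := Complex.exp (h * z)

/-- the symmetric q-number `[z]_q = (q^z - q^{-z})/(q - q⁻¹)`. -/
def bq (h z : ℂ) : ℂ := (qz h z - qz h (-z)) / (qh h - (qh h)⁻¹)

/-- `q` is not a root of unity. -/
def NotRootOfUnity (q : ℂ) : Prop := ∀ m : ℕ, 0 < m → q ^ m ≠ 1

/-! ### The quantum nilpotent algebra `U_q(n₋)` (≅ `U_q(n₊)`), by generators and relations. -/

/-- Generators `f_1, …, f_{n-1}` (0-based: `f_0, …, f_{n-2}`). -/
inductive NGen (n : ℕ) : Type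
  | f : Fin (n-1) → NGen n

/-- The q-Serre relations of `U_q(n₋)`. -/
inductive NRel (n : ℕ) (q : ℂ) :
    FreeAlgebra ℂ (NGen n) → FreeAlgebra ℂ (NGen n) → Prop
  | serre (i j : Fin (n-1)) (h : (i:ℕ)+1 = j ∨ (j:ℕ)+1 = i) :
      NRel n q
        (FreeAlgebra.ι ℂ (NGen.f i) * FreeAlgebra.ι ℂ (NGen.f i) * FreeAlgebra.ι ℂ (NGen.f j)
          + FreeAlgebra.ι ℂ (NGen.f j) * FreeAlgebra.ι ℂ (NGen.f i) * FreeAlgebra.ι ℂ (NGen.f i))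
        ((q + q⁻¹) •
          (FreeAlgebra.ι ℂ (NGen.f i) * FreeAlgebra.ι ℂ (NGen.f j) * FreeAlgebra.ι ℂ (NGen.f i)))
  | comm (i j : Fin (n-1)) (h : (i:ℕ)+2 ≤ j ∨ (j:ℕ)+2 ≤ i) :
      NRel n q (FreeAlgebra.ι ℂ (NGen.f i) * FreeAlgebra.ι ℂ (NGen.f j))
        (FreeAlgebra.ι ℂ (NGen.f j) * FreeAlgebra.ι ℂ (NGen.f i))

/-- `U_q(n₋)` (equally `U_q(n₊)`). -/
abbrev Un (n : ℕ) (q : ℂ) := RingQuot (NRel n q)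

/-- The generator `f_i` (0-based) of `U_q(n₋)`. -/
def uf (n : ℕ) (q : ℂ) (i : Fin (n-1)) : Un n q :=
  RingQuot.mkAlgHom ℂ (NRel n q) (FreeAlgebra.ι ℂ (NGen.f i))

/-- `f_a` for a natural-number index (junk value `0` out of range). -/
def ufn (n : ℕ) (q : ℂ) (a : ℕ) : Un n q :=
  if h : a < n - 1 then uf n q ⟨a, h⟩ else 0

/-- The monomial `f_{a-1} ⋯ f_1 f_0` (`= 1` for `a = 0`). -/
def mon (n : ℕ) (q : ℂ) : ℕ → Un n q
  | 0 => 1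
  | a+1 => ufn n q a * mon n q a

/-- The left ideal of `U_q(n₋)` generated by `f_0 ^ 2` and the `f_i`, `i ≥ 1` (0-based). -/
def Jideal (n : ℕ) (q : ℂ) : Submodule (Un n q) (Un n q) :=
  Submodule.span (Un n q)
    ({ufn n q 0 * ufn n q 0} ∪ {x | ∃ i : Fin (n-1), 1 ≤ (i:ℕ) ∧ x = uf n q i})

/-- Inclusion `Fin (n-1) → Fin n`, `j ↦ j`. -/
def clo (n : ℕ) (j : Fin (n-1)) : Fin n := ⟨j, by have := j.isLt; omega⟩

/-- Inclusion `Fin (n-1) → Fin n`, `j ↦ j+1`. -/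
def chi (n : ℕ) (j : Fin (n-1)) : Fin n := ⟨(j:ℕ)+1, by have := j.isLt; omega⟩

/-- The natural action of the generator `f_i` on `ℂⁿ`:  `w_j ↦ δ_{ij} w_{j+1}` (0-based). -/
def natF (n : ℕ) (i : Fin (n-1)) : (Fin n → ℂ) →ₗ[ℂ] (Fin n → ℂ) :=
  (LinearMap.single ℂ (fun _ : Fin n => ℂ) (chi n i)).comp (LinearMap.proj (clo n i))

/-! ### The quantum group `U_q(gl_n)` by generators and relations. -/

/-- Generators `K_i, K_i⁻¹` (`i : Fin n`) and `e_j, f_j` (`j : Fin (n-1)`), 0-based. -/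
inductive Gen (n : ℕ) : Type
  | K : Fin n → Gen n
  | Kinv : Fin n → Gen n
  | E : Fin (n-1) → Gen n
  | F : Fin (n-1) → Gen n

/-- Kronecker delta with values in `ℤ`. -/
def dlt {n : ℕ} (i j : Fin n) : ℤ := if i = j then 1 else 0

open FreeAlgebra in
/-- The defining relations of `U_q(gl_n)`. -/
inductive GLRel (n : ℕ) (q : ℂ) :
    FreeAlgebra ℂ (Gen n) → FreeAlgebra ℂ (Gen n) → Prop
  | KKinv (i : Fin n) : GLRel n q (ι ℂ (Gen.K i) * ι ℂ (Gen.Kinv i)) 1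
  | KinvK (i : Fin n) : GLRel n q (ι ℂ (Gen.Kinv i) * ι ℂ (Gen.K i)) 1
  | KK (i j : Fin n) : GLRel n q (ι ℂ (Gen.K i) * ι ℂ (Gen.K j)) (ι ℂ (Gen.K j) * ι ℂ (Gen.K i))
  | KE (i : Fin n) (j : Fin (n-1)) :
      GLRel n q (ι ℂ (Gen.K i) * ι ℂ (Gen.E j))
        ((q ^ (dlt i (clo n j) - dlt i (chi n j))) • (ι ℂ (Gen.E j) * ι ℂ (Gen.K i)))
  | KF (i : Fin n) (j : Fin (n-1)) :
      GLRel n q (ι ℂ (Gen.K i) * ι ℂ (Gen.F j))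
        ((q ^ (dlt i (chi n j) - dlt i (clo n j))) • (ι ℂ (Gen.F j) * ι ℂ (Gen.K i)))
  | EF (i j : Fin (n-1)) :
      GLRel n q (ι ℂ (Gen.E i) * ι ℂ (Gen.F j) - ι ℂ (Gen.F j) * ι ℂ (Gen.E i))
        (if i = j then
          ((q - q⁻¹)⁻¹) •
            (ι ℂ (Gen.K (clo n i)) * ι ℂ (Gen.Kinv (chi n i))
              - ι ℂ (Gen.Kinv (clo n i)) * ι ℂ (Gen.K (chi n i)))
         else 0)
  | serreE (i j : Fin (n-1)) (h : (i:ℕ)+1 = j ∨ (j:ℕ)+1 = i) :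
      GLRel n q
        (ι ℂ (Gen.E i) * ι ℂ (Gen.E i) * ι ℂ (Gen.E j)
          + ι ℂ (Gen.E j) * ι ℂ (Gen.E i) * ι ℂ (Gen.E i))
        ((q + q⁻¹) • (ι ℂ (Gen.E i) * ι ℂ (Gen.E j) * ι ℂ (Gen.E i)))
  | serreF (i j : Fin (n-1)) (h : (i:ℕ)+1 = j ∨ (j:ℕ)+1 = i) :
      GLRel n q
        (ι ℂ (Gen.F i) * ι ℂ (Gen.F i) * ι ℂ (Gen.F j)
          + ι ℂ (Gen.F j) * ι ℂ (Gen.F i) * ι ℂ (Gen.F i))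
        ((q + q⁻¹) • (ι ℂ (Gen.F i) * ι ℂ (Gen.F j) * ι ℂ (Gen.F i)))
  | commE (i j : Fin (n-1)) (h : (i:ℕ)+2 ≤ j ∨ (j:ℕ)+2 ≤ i) :
      GLRel n q (ι ℂ (Gen.E i) * ι ℂ (Gen.E j)) (ι ℂ (Gen.E j) * ι ℂ (Gen.E i))
  | commF (i j : Fin (n-1)) (h : (i:ℕ)+2 ≤ j ∨ (j:ℕ)+2 ≤ i) :
      GLRel n q (ι ℂ (Gen.F i) * ι ℂ (Gen.F j)) (ι ℂ (Gen.F j) * ι ℂ (Gen.F i))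

/-- The quantum group `U_q(gl_n)`. -/
abbrev Uq (n : ℕ) (q : ℂ) := RingQuot (GLRel n q)

def uK (n : ℕ) (q : ℂ) (i : Fin n) : Uq n q :=
  RingQuot.mkAlgHom ℂ (GLRel n q) (FreeAlgebra.ι ℂ (Gen.K i))

def uKinv (n : ℕ) (q : ℂ) (i : Fin n) : Uq n q :=
  RingQuot.mkAlgHom ℂ (GLRel n q) (FreeAlgebra.ι ℂ (Gen.Kinv i))

def uE (n : ℕ) (q : ℂ) (j : Fin (n-1)) : Uq n q :=
  RingQuot.mkAlgHom ℂ (GLRel n q) (FreeAlgebra.ι ℂ (Gen.E j))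

def uF (n : ℕ) (q : ℂ) (j : Fin (n-1)) : Uq n q :=
  RingQuot.mkAlgHom ℂ (GLRel n q) (FreeAlgebra.ι ℂ (Gen.F j))

/-- `U_q(gl_n)` with `q = exp ħ`. -/
abbrev UQ (n : ℕ) (h : ℂ) := Uq n (qh h)

/-- `K_a` for a natural-number index (junk value `1` out of range). -/
def uKn (n : ℕ) (h : ℂ) (a : ℕ) : UQ n h := if ha : a < n then uK n (qh h) ⟨a, ha⟩ else 1

/-- `K_a⁻¹` for a natural-number index (junk value `1` out of range). -/
def uKinvn (n : ℕ) (h : ℂ) (a : ℕ) : UQ n h := if ha : a < n then uKinv n (qh h) ⟨a, ha⟩ else 1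

/-- `e_a` for a natural-number index (junk value `0` out of range). -/
def uEn (n : ℕ) (h : ℂ) (a : ℕ) : UQ n h := if ha : a < n - 1 then uE n (qh h) ⟨a, ha⟩ else 0

/-- `f_a` for a natural-number index (junk value `0` out of range). -/
def uFn (n : ℕ) (h : ℂ) (a : ℕ) : UQ n h := if ha : a < n - 1 then uF n (qh h) ⟨a, ha⟩ else 0

/-! ### Verma modules. -/

/-- The left ideal generated by the `e_j` and the `K_i - q^{λ_i}`. -/
def VermaIdeal (n : ℕ) (h : ℂ) (lam : Fin n → ℂ) : Submodule (UQ n h) (UQ n h) :=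
  Submodule.span (UQ n h)
    ({x | ∃ j : Fin (n-1), x = uE n (qh h) j} ∪
     {x | ∃ i : Fin n, x = uK n (qh h) i - algebraMap ℂ (UQ n h) (qz h (lam i))})

/-- The Verma module `M̂_λ`. -/
abbrev Verma (n : ℕ) (h : ℂ) (lam : Fin n → ℂ) := UQ n h ⧸ VermaIdeal n h lam

/-- The highest-weight generator `v_λ` of `M̂_λ`. -/
def vv (n : ℕ) (h : ℂ) (lam : Fin n → ℂ) : Verma n h lam := Submodule.Quotient.mk 1

/-! ### Dynamical root vectors. -/

/-- The Cartan coefficient `C(c) = (q^c K_{a+1} K_b⁻¹ - q^{-c} K_{a+1}⁻¹ K_b)/(q - q⁻¹)`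
(0-based indices). -/
def Cc (n : ℕ) (h : ℂ) (a b c : ℕ) : UQ n h :=
  ((qh h - (qh h)⁻¹)⁻¹) •
    ((qh h ^ c) • (uKn n h (a+1) * uKinvn n h b)
      - ((qh h)⁻¹ ^ c) • (uKinvn n h (a+1) * uKn n h b))

/-- The dynamical root vector `f̌_{ε_a - ε_b}` (0-based indices `a < b < n`). -/
def fcheck (n : ℕ) (h : ℂ) (a b : ℕ) : UQ n h :=
  if hb : b ≤ a + 1 then uFn n h a
  else uFn n h a * fcheck n h (a+1) b * Cc n h a b (b-a-1)
    - fcheck n h (a+1) b * uFn n h a * Cc n h a b (b-a-2)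
termination_by b - a
decreasing_by all_goals omega

/-- `f̌_{ε_a - ε_b}` extended by the convention `f̌_0 = 1`. -/
def fcheckE (n : ℕ) (h : ℂ) (a b : ℕ) : UQ n h := if a = b then 1 else fcheck n h a b

/-- `λ_a` for a natural-number index (junk value `0` out of range). -/
def lamn (n : ℕ) (lam : Fin n → ℂ) (a : ℕ) : ℂ := if ha : a < n then lam ⟨a, ha⟩ else 0

/-! ### The module `ℂⁿ ⊗ Y`, realized on `Fin n → Y` via `Σ_i w_i ⊗ y_i ↔ (y_i)_i`. -/

section Tensor

variable (n : ℕ) (h : ℂ) {Y : Type*} [AddCommGroup Y] [Module ℂ Y] [Module (UQ n h) Y]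

/-- The action of `e_k` on `ℂⁿ ⊗ Y`:  `e_k(w ⊗ y) = e_k w ⊗ y + K_k K_{k+1}⁻¹ w ⊗ e_k y`. -/
def Etens (k : Fin (n-1)) (u : Fin n → Y) : Fin n → Y := fun j =>
  (if j = clo n k then u (chi n k) else 0)
    + (qh h ^ (dlt (clo n k) j - dlt (chi n k) j)) • (uE n (qh h) k • u j)

/-- The action of `f_k` on `ℂⁿ ⊗ Y`:  `f_k(w ⊗ y) = w ⊗ f_k y + f_k w ⊗ K_k⁻¹ K_{k+1} y`. -/
def Ftens (k : Fin (n-1)) (u : Fin n → Y) : Fin n → Y := fun j =>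
  (uF n (qh h) k • u j)
    + (if j = chi n k then (uKinv n (qh h) (clo n k) * uK n (qh h) (chi n k)) • u (clo n k) else 0)

/-- The action of `K_i` on `ℂⁿ ⊗ Y`:  `K_i(w ⊗ y) = K_i w ⊗ K_i y`. -/
def Ktens (i : Fin n) (u : Fin n → Y) : Fin n → Y := fun j =>
  (if i = j then qh h else 1) • (uK n (qh h) i • u j)

/-- The action of `K_i⁻¹` on `ℂⁿ ⊗ Y`:  `K_i⁻¹(w ⊗ y) = K_i⁻¹ w ⊗ K_i⁻¹ y`. -/
def Kinvtens (i : Fin n) (u : Fin n → Y) : Fin n → Y := fun j =>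
  (if i = j then (qh h)⁻¹ else 1) • (uKinv n (qh h) i • u j)

end Tensor

/-- `V̂^λ_c`: the smallest subspace of `ℂⁿ ⊗ M̂_λ` containing `w_p ⊗ v_λ` for `p < c`
(0-based) and stable under all `f_k`. -/
def Vhat (n : ℕ) (h : ℂ) (lam : Fin n → ℂ) (c : ℕ) : Submodule ℂ (Fin n → Verma n h lam) :=
  sInf {W | (∀ p : Fin n, (p:ℕ) < c → Pi.single p (vv n h lam) ∈ W) ∧
            ∀ (k : Fin (n-1)) x, x ∈ W → Ftens n h k x ∈ W}

/-- The coefficient `(-q)^a ∏_{j<a} [λ_j - λ_l + l - j - 1]_q` of `û_l` (0-based). -/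
def coefu (n : ℕ) (h : ℂ) (lam : Fin n → ℂ) (l a : ℕ) : ℂ :=
  (-(qh h))^a * ∏ j ∈ Finset.range a, bq h (lamn n lam j - lamn n lam l + (l:ℂ) - (j:ℂ) - 1)

/-- The vector `û_l = Σ_{a ≤ l} (-q)^a (∏_{j<a} [λ_j-λ_l+l-j-1]_q) · w_a ⊗ f̌_{ε_a-ε_l} v_λ`
(0-based `l`). -/
def uhat (n : ℕ) (h : ℂ) (lam : Fin n → ℂ) (l : ℕ) : Fin n → Verma n h lam := fun a =>
  if (a:ℕ) ≤ l then coefu n h lam l a • (fcheckE n h a l • vv n h lam) else 0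

/-- `M̂^λ_l`: the `U_q(gl_n)`-submodule of `ℂⁿ ⊗ M̂_λ` generated by `û_l` (0-based `l`). -/
def Mhat (n : ℕ) (h : ℂ) (lam : Fin n → ℂ) (l : ℕ) : Submodule ℂ (Fin n → Verma n h lam) :=
  sInf {W | uhat n h lam l ∈ W ∧
            (∀ (k : Fin (n-1)) x, x ∈ W → Etens n h k x ∈ W) ∧
            (∀ (k : Fin (n-1)) x, x ∈ W → Ftens n h k x ∈ W) ∧
            (∀ (i : Fin n) x, x ∈ W → Ktens n h i x ∈ W) ∧
            (∀ (i : Fin n) x, x ∈ W → Kinvtens n h i x ∈ W)}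

/-- The principal monomial `ψ_{ab} = f_a f_{a+1} ⋯ f_{b-1}` (0-based). -/
def psi (n : ℕ) (h : ℂ) (a b : ℕ) : UQ n h :=
  ((List.range (b - a)).map (fun t => uFn n h (a + t))).prod

/-! ### Blocks, admissible permutations, the shifted Weyl action. -/

/-- The 0-based starting position `o_i = n_1 + ⋯ + n_{i-1}` of the `i`-th block. -/
def ost (k : ℕ) (nn : Fin k → ℕ) (i : Fin k) : ℕ := ∑ j ∈ Finset.Iio i, nn j

/-- `a` and `b` lie in the same block. -/
def sameBlock (n k : ℕ) (nn : Fin k → ℕ) (a b : Fin n) : Prop :=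
  ∃ i : Fin k, ost k nn i ≤ (a:ℕ) ∧ (a:ℕ) < ost k nn i + nn i ∧
    ost k nn i ≤ (b:ℕ) ∧ (b:ℕ) < ost k nn i + nn i

/-- A permutation is admissible if it is increasing on each block. -/
def Admissible (n k : ℕ) (nn : Fin k → ℕ) (σ : Equiv.Perm (Fin n)) : Prop :=
  ∀ a b : Fin n, a < b → sameBlock n k nn a b → σ a < σ b

/-- The shifted action `σ·λ = σ(λ+ρ) - ρ`, with `ρ = (n-1, n-2, …, 0)`. -/
def sdot (n : ℕ) (σ : Equiv.Perm (Fin n)) (lam : Fin n → ℂ) : Fin n → ℂ := fun a =>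
  (lam (σ⁻¹ a) + ((n:ℂ) - 1 - (((σ⁻¹ a : Fin n) : ℕ) : ℂ))) - ((n:ℂ) - 1 - ((a:ℕ) : ℂ))

/-- The submodule of `M̂_{σ·λ}` generated by the singular vectors
`f̌_{ε_{σ(i)} - ε_{σ(i+1)}} v_{σ·λ}`, over all `i` with `i, i+1` in the same block. -/
def NSub (n : ℕ) (h : ℂ) (k : ℕ) (nn : Fin k → ℕ) (σ : Equiv.Perm (Fin n))
    (lam : Fin n → ℂ) : Submodule (UQ n h) (Verma n h (sdot n σ lam)) :=
  Submodule.span (UQ n h)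
    {x | ∃ (i : Fin n) (hi : (i:ℕ)+1 < n), sameBlock n k nn i ⟨(i:ℕ)+1, hi⟩ ∧
      x = fcheck n h ((σ i : Fin n) : ℕ) ((σ ⟨(i:ℕ)+1, hi⟩ : Fin n) : ℕ) • vv n h (sdot n σ lam)}

section Projection

variable (n : ℕ) (h : ℂ) {W : Type*} [AddCommGroup W] [Module ℂ W] [Module (UQ n h) W]
  [IsScalarTower ℂ (UQ n h) W] (N : Submodule (UQ n h) W)

/-- The map `id ⊗ ϖ : ℂⁿ ⊗ W → ℂⁿ ⊗ (W/N)` in the realization on `n`-tuples. -/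
def piMkQ : (Fin n → W) →ₗ[ℂ] (Fin n → W ⧸ N) where
  toFun u := fun j => Submodule.Quotient.mk (u j)
  map_add' u v := by funext j; simp
  map_smul' c u := by funext j; simp [← Submodule.Quotient.mk_smul]

end Projection

section Rels
variable (n : ℕ) (h : ℂ)

lemma qh_ne_zero : qh h ≠ 0 := Complex.exp_ne_zero h

lemma qz_add (a b : ℂ) : qz h (a+b) = qz h a * qz h b := by
  simp [qz, mul_add, Complex.exp_add]

lemma qz_zero : qz h 0 = 1 := by simp [qz]

lemma qz_nat (c : ℕ) : qh h ^ c = qz h c := by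
  rw [qz, qh, ← Complex.exp_nat_mul]; ring_nf

lemma qz_neg_nat (c : ℕ) : (qh h)⁻¹ ^ c = qz h (-c) := by
  rw [qz, qh, ← Complex.exp_neg, ← Complex.exp_nat_mul]; ring_nf

lemma rel_KF (i : Fin n) (j : Fin (n-1)) :
    uK n (qh h) i * uF n (qh h) j
      = (qh h ^ (dlt i (chi n j) - dlt i (clo n j))) • (uF n (qh h) j * uK n (qh h) i) := by
  have := RingQuot.mkAlgHom_rel ℂ (GLRel.KF (n := n) (q := qh h) i j)
  simpa [uK, uF, map_mul, map_smul] using this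

lemma rel_KKinv (i : Fin n) : uK n (qh h) i * uKinv n (qh h) i = 1 := by
  have := RingQuot.mkAlgHom_rel ℂ (GLRel.KKinv (n := n) (q := qh h) i)
  simpa [uK, uKinv, map_mul, map_one] using this

lemma rel_KinvK (i : Fin n) : uKinv n (qh h) i * uK n (qh h) i = 1 := by
  have := RingQuot.mkAlgHom_rel ℂ (GLRel.KinvK (n := n) (q := qh h) i)
  simpa [uK, uKinv, map_mul, map_one] using this

lemma rel_commF (i j : Fin (n-1)) (hij : (i:ℕ)+2 ≤ j ∨ (j:ℕ)+2 ≤ i) :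
    uF n (qh h) i * uF n (qh h) j = uF n (qh h) j * uF n (qh h) i := by
  have := RingQuot.mkAlgHom_rel ℂ (GLRel.commF (n := n) (q := qh h) i j hij)
  simpa [uF, map_mul] using this

lemma rel_KinvF (i : Fin n) (j : Fin (n-1)) :
    uKinv n (qh h) i * uF n (qh h) j
      = (qh h ^ (-(dlt i (chi n j) - dlt i (clo n j)))) • (uF n (qh h) j * uKinv n (qh h) i) := by
  have h1 : uKinv n (qh h) i * (uK n (qh h) i * uF n (qh h) j) * uKinv n (qh h) i
      = (qh h ^ (dlt i (chi n j) - dlt i (clo n j))) •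
        (uKinv n (qh h) i * (uF n (qh h) j * uK n (qh h) i) * uKinv n (qh h) i) := by
    rw [rel_KF]; simp [mul_smul_comm, smul_mul_assoc]
  have h2 : uKinv n (qh h) i * (uK n (qh h) i * uF n (qh h) j) * uKinv n (qh h) i
      = uF n (qh h) j * uKinv n (qh h) i := by
    rw [← mul_assoc, rel_KinvK, one_mul]
  have h3 : uKinv n (qh h) i * (uF n (qh h) j * uK n (qh h) i) * uKinv n (qh h) i
      = uKinv n (qh h) i * uF n (qh h) j := by
    rw [mul_assoc, mul_assoc, rel_KKinv, mul_one]
  rw [h2, h3] at h1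
  rw [h1, smul_smul, ← zpow_add₀ (qh_ne_zero h)]
  simp

end Rels

section Weights
variable (n : ℕ) (h : ℂ) (lam : Fin n → ℂ)

lemma qz_ne_zero (z : ℂ) : qz h z ≠ 0 := Complex.exp_ne_zero _

lemma qz_int (d : ℤ) : qh h ^ d = qz h d := by
  rw [qz, qh, mul_comm, Complex.exp_int_mul]

lemma qz_neg (z : ℂ) : qz h (-z) = (qz h z)⁻¹ := by
  rw [qz, qz, ← Complex.exp_neg]; ring_nf

/-- specialized smul lemmas for `Verma` to avoid instance unification issues -/
lemma vsmul_comm (c : ℂ) (A : UQ n h) (x : Verma n h lam) : A • c • x = c • A • x :=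
  smul_comm A c x

lemma vsmul_smul (c d : ℂ) (x : Verma n h lam) : c • d • x = (c*d) • x := smul_smul c d x

lemma vsmul_assoc (c : ℂ) (A : UQ n h) (x : Verma n h lam) : (c • A) • x = c • (A • x) :=
  smul_assoc c A x

lemma vone_smul (x : Verma n h lam) : (1:ℂ) • x = x := one_smul ℂ x

lemma vsmul_cancel {c : ℂ} (hc : c ≠ 0) {x y : Verma n h lam} (hxy : c • x = y) :
    x = c⁻¹ • y := by
  rw [← hxy, vsmul_smul, inv_mul_cancel₀ hc, vone_smul]

/-- `x` has weight `ν`. -/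
def HWt (ν : Fin n → ℂ) (x : Verma n h lam) : Prop :=
  ∀ i : Fin n, uK n (qh h) i • x = qz h (ν i) • x ∧
    uKinv n (qh h) i • x = qz h (-ν i) • x

lemma hwt_vv : HWt n h lam lam (vv n h lam) := by
  intro i
  have hK : uK n (qh h) i • vv n h lam = qz h (lam i) • vv n h lam := by
    show uK n (qh h) i • Submodule.Quotient.mk 1 = _
    rw [← Submodule.Quotient.mk_smul, smul_eq_mul, mul_one]
    have hmem : uK n (qh h) i - algebraMap ℂ (UQ n h) (qz h (lam i)) ∈ VermaIdeal n h lam :=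
      Submodule.subset_span (Or.inr ⟨i, rfl⟩)
    have h1 : (Submodule.Quotient.mk (uK n (qh h) i) : Verma n h lam)
        = Submodule.Quotient.mk (algebraMap ℂ (UQ n h) (qz h (lam i))) :=
      (Submodule.Quotient.eq _).2 hmem
    rw [h1, show (algebraMap ℂ (UQ n h) (qz h (lam i))) = qz h (lam i) • (1 : UQ n h) by
      rw [Algebra.smul_def, mul_one], Submodule.Quotient.mk_smul]
    rfl
  refine ⟨hK, ?_⟩
  have h2 : qz h (lam i) • uKinv n (qh h) i • vv n h lam = vv n h lam := by
    calc qz h (lam i) • uKinv n (qh h) i • vv n h lam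
        = uKinv n (qh h) i • (qz h (lam i) • vv n h lam) := (vsmul_comm n h lam _ _ _).symm
      _ = uKinv n (qh h) i • (uK n (qh h) i • vv n h lam) := by rw [hK]
      _ = vv n h lam := by rw [← mul_smul, rel_KinvK, one_smul]
  rw [vsmul_cancel n h lam (qz_ne_zero h (lam i)) h2, qz_neg]

/-- weight shift by `f_k`. -/
def wsh (k : Fin (n-1)) (ν : Fin n → ℂ) : Fin n → ℂ := fun i =>
  ν i + ((dlt i (chi n k) - dlt i (clo n k) : ℤ) : ℂ)

lemma wsh_high (k : Fin (n-1)) (ν : Fin n → ℂ) (i : Fin n) (hi : (k:ℕ)+1 < (i:ℕ)) :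
    wsh n k ν i = ν i := by
  have h1 : i ≠ chi n k := by
    intro e; apply absurd (congrArg (Fin.val) e); simp [chi]; omega
  have h2 : i ≠ clo n k := by
    intro e; apply absurd (congrArg (Fin.val) e); simp [clo]; omega
  simp [wsh, dlt, h1, h2]

lemma hwt_uF (k : Fin (n-1)) {ν : Fin n → ℂ} {x : Verma n h lam} (hx : HWt n h lam ν x) :
    HWt n h lam (wsh n k ν) (uF n (qh h) k • x) := by
  intro i
  set d : ℤ := dlt i (chi n k) - dlt i (clo n k) with hd
  have key : ∀ (e : ℤ) (B : UQ n h) (w : ℂ),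
      uF n (qh h) k * B = (qh h ^ e) • (B * uF n (qh h) k) → False ∨ True := fun _ _ _ _ =>
    Or.inr trivial
  constructor
  · calc uK n (qh h) i • uF n (qh h) k • x
        = (uK n (qh h) i * uF n (qh h) k) • x := (mul_smul _ _ _).symm
      _ = ((qh h ^ d) • (uF n (qh h) k * uK n (qh h) i)) • x := by rw [rel_KF]
      _ = (qh h ^ d) • (uF n (qh h) k • (uK n (qh h) i • x)) := by
          rw [vsmul_assoc, mul_smul]
      _ = (qh h ^ d) • (uF n (qh h) k • (qz h (ν i) • x)) := by rw [(hx i).1]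
      _ = (qh h ^ d) • (qz h (ν i) • (uF n (qh h) k • x)) := by rw [vsmul_comm]
      _ = qz h (wsh n k ν i) • uF n (qh h) k • x := by
          rw [vsmul_smul, qz_int, ← qz_add, wsh, add_comm]
  · calc uKinv n (qh h) i • uF n (qh h) k • x
        = (uKinv n (qh h) i * uF n (qh h) k) • x := (mul_smul _ _ _).symm
      _ = ((qh h ^ (-d)) • (uF n (qh h) k * uKinv n (qh h) i)) • x := by rw [rel_KinvF]
      _ = (qh h ^ (-d)) • (uF n (qh h) k • (uKinv n (qh h) i • x)) := by
          rw [vsmul_assoc, mul_smul]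
      _ = (qh h ^ (-d)) • (uF n (qh h) k • (qz h (-ν i) • x)) := by rw [(hx i).2]
      _ = (qh h ^ (-d)) • (qz h (-ν i) • (uF n (qh h) k • x)) := by rw [vsmul_comm]
      _ = qz h (-wsh n k ν i) • uF n (qh h) k • x := by
          have harg : ((-d : ℤ) : ℂ) + -ν i = -(wsh n k ν i) := by
            simp only [wsh, hd]; push_cast; ring
          rw [vsmul_smul, qz_int, ← qz_add, harg]

lemma hwt_uFn (a : ℕ) (ha : a < n - 1) {ν : Fin n → ℂ} {x : Verma n h lam}
    (hx : HWt n h lam ν x) :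
    HWt n h lam (wsh n ⟨a, ha⟩ ν) (uFn n h a • x) := by
  rw [uFn, dif_pos ha]; exact hwt_uF n h lam _ hx

end Weights

section CC
variable (n : ℕ) (h : ℂ) (lam : Fin n → ℂ)

lemma vsub_smul (c d : ℂ) (x : Verma n h lam) : (c - d) • x = c • x - d • x := sub_smul c d x

lemma vzero_smul (x : Verma n h lam) : (0:ℂ) • x = 0 := zero_smul ℂ x

lemma uFn_eq (c : ℕ) (hc : c < n-1) : uFn n h c = uF n (qh h) ⟨c,hc⟩ := dif_pos hc
lemma uFn_zero (c : ℕ) (hc : ¬ c < n-1) : uFn n h c = 0 := dif_neg hc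

/-- eigenvalue of `Cc` on a weight vector -/
lemma cc_smul (a b c : ℕ) (ha : a + 1 < n) (hb : b < n) {ν : Fin n → ℂ}
    {x : Verma n h lam} (hx : HWt n h lam ν x) :
    Cc n h a b c • x
      = (((qh h - (qh h)⁻¹)⁻¹) * (qz h ((c:ℂ) + (ν ⟨a+1,ha⟩ - ν ⟨b,hb⟩))
          - qz h (-((c:ℂ) + (ν ⟨a+1,ha⟩ - ν ⟨b,hb⟩))))) • x := by
  set t : ℂ := ν ⟨a+1,ha⟩ - ν ⟨b,hb⟩ with ht
  have e1 : (uKn n h (a+1) * uKinvn n h b) • x = qz h t • x := by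
    rw [uKn, dif_pos ha, uKinvn, dif_pos hb, mul_smul, (hx ⟨b,hb⟩).2,
      vsmul_comm, (hx ⟨a+1,ha⟩).1, vsmul_smul, ← qz_add,
      show -ν ⟨b,hb⟩ + ν ⟨a+1,ha⟩ = t by rw [ht]; ring]
  have e2 : (uKinvn n h (a+1) * uKn n h b) • x = qz h (-t) • x := by
    rw [uKinvn, dif_pos ha, uKn, dif_pos hb, mul_smul, (hx ⟨b,hb⟩).1,
      vsmul_comm, (hx ⟨a+1,ha⟩).2, vsmul_smul, ← qz_add,
      show ν ⟨b,hb⟩ + -ν ⟨a+1,ha⟩ = -t by rw [ht]; ring]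
  rw [Cc, vsmul_assoc, sub_smul, vsmul_assoc, vsmul_assoc, e1, e2,
    vsmul_smul, vsmul_smul, qz_nat, qz_neg_nat, ← qz_add, ← qz_add, ← vsub_smul, vsmul_smul,
    show (-(c:ℂ) + -t : ℂ) = -((c:ℂ) + t) from by ring]

/-- the eigenvalue vanishes when the argument is zero -/
lemma cc_smul_zero (a b c : ℕ) (ha : a + 1 < n) (hb : b < n) {ν : Fin n → ℂ}
    {x : Verma n h lam} (hx : HWt n h lam ν x)
    (hz : (c:ℂ) + (ν ⟨a+1,ha⟩ - ν ⟨b,hb⟩) = 0) :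
    Cc n h a b c • x = 0 := by
  rw [cc_smul n h lam a b c ha hb hx, hz]
  rw [show (-(0:ℂ)) = (0:ℂ) by ring, qz_zero h, sub_self, mul_zero, vzero_smul]

/-- `K_m` commutes with `f_c` when `m ∉ {c, c+1}`. -/
lemma uKn_comm_uFn (m c : ℕ) (h1 : m ≠ c) (h2 : m ≠ c + 1) :
    uKn n h m * uFn n h c = uFn n h c * uKn n h m := by
  by_cases hm : m < n
  · by_cases hc : c < n - 1
    · rw [uKn, dif_pos hm, uFn, dif_pos hc]
      have hd : dlt (⟨m, hm⟩ : Fin n) (chi n ⟨c, hc⟩) - dlt ⟨m, hm⟩ (clo n ⟨c, hc⟩) = 0 := by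
        have e1 : (⟨m, hm⟩ : Fin n) ≠ chi n ⟨c, hc⟩ := by
          intro e; exact h2 (by simpa [chi] using congrArg Fin.val e)
        have e2 : (⟨m, hm⟩ : Fin n) ≠ clo n ⟨c, hc⟩ := by
          intro e; exact h1 (by simpa [clo] using congrArg Fin.val e)
        simp [dlt, e1, e2]
      rw [rel_KF, hd]
      simp
    · rw [uFn, dif_neg hc]; simp
  · rw [uKn, dif_neg hm]; simp

lemma uKinvn_comm_uFn (m c : ℕ) (h1 : m ≠ c) (h2 : m ≠ c + 1) :
    uKinvn n h m * uFn n h c = uFn n h c * uKinvn n h m := by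
  by_cases hm : m < n
  · by_cases hc : c < n - 1
    · rw [uKinvn, dif_pos hm, uFn, dif_pos hc]
      have hd : dlt (⟨m, hm⟩ : Fin n) (chi n ⟨c, hc⟩) - dlt ⟨m, hm⟩ (clo n ⟨c, hc⟩) = 0 := by
        have e1 : (⟨m, hm⟩ : Fin n) ≠ chi n ⟨c, hc⟩ := by
          intro e; exact h2 (by simpa [chi] using congrArg Fin.val e)
        have e2 : (⟨m, hm⟩ : Fin n) ≠ clo n ⟨c, hc⟩ := by
          intro e; exact h1 (by simpa [clo] using congrArg Fin.val e)
        simp [dlt, e1, e2]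
      rw [rel_KinvF, hd]
      simp
    · rw [uFn, dif_neg hc]; simp
  · rw [uKinvn, dif_neg hm]; simp

lemma uFn_comm (d c : ℕ) (hdc : c + 2 ≤ d) :
    uFn n h d * uFn n h c = uFn n h c * uFn n h d := by
  by_cases hd : d < n - 1
  · by_cases hc : c < n - 1
    · rw [uFn_eq n h d hd, uFn_eq n h c hc]
      exact rel_commF n h ⟨d, hd⟩ ⟨c, hc⟩ (Or.inr hdc)
    · rw [uFn_zero n h c hc]; simp
  · rw [uFn_zero n h d hd]; simp

lemma cc_comm (a b e c : ℕ) (hca : c + 2 ≤ a) (hcb : c + 2 ≤ b) :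
    Cc n h a b e * uFn n h c = uFn n h c * Cc n h a b e := by
  have k1 := uKn_comm_uFn n h (a+1) c (by omega) (by omega)
  have k2 := uKinvn_comm_uFn n h b c (by omega) (by omega)
  have k3 := uKinvn_comm_uFn n h (a+1) c (by omega) (by omega)
  have k4 := uKn_comm_uFn n h b c (by omega) (by omega)
  rw [Cc]
  rw [smul_mul_assoc, mul_smul_comm, sub_mul, mul_sub, smul_mul_assoc, smul_mul_assoc,
    mul_smul_comm, mul_smul_comm]
  congr 2
  · rw [mul_assoc, k2, ← mul_assoc, k1, mul_assoc]
  · rw [mul_assoc, k4, ← mul_assoc, k3, mul_assoc]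

/-- `f̌_{ab}` commutes with `f_c` for `c + 2 ≤ a`. -/
lemma fcheck_comm (a b c : ℕ) (hca : c + 2 ≤ a) :
    fcheck n h a b * uFn n h c = uFn n h c * fcheck n h a b := by
  rw [fcheck]
  split_ifs with hb
  · exact uFn_comm n h a c hca
  · have hcb : c + 2 ≤ b := by omega
    have IH := fcheck_comm (a+1) b c (by omega)
    rw [sub_mul, mul_sub]
    congr 1
    · rw [mul_assoc, mul_assoc, cc_comm n h a b _ c hca hcb, ← mul_assoc (fcheck n h (a+1) b),
        IH, ← mul_assoc, ← mul_assoc, ← mul_assoc, uFn_comm n h a c hca, mul_assoc (uFn n h c)]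
    · rw [mul_assoc, mul_assoc, cc_comm n h a b _ c hca hcb, ← mul_assoc (uFn n h a),
        uFn_comm n h a c hca, ← mul_assoc, ← mul_assoc, ← mul_assoc, IH,
        mul_assoc (uFn n h c)]
termination_by b - a
decreasing_by omega

end CC

/-- vectors obtained from `v_λ` by applying `f_c` with `c < b` (0-based), with weight tracking -/
inductive Gv (n : ℕ) (h : ℂ) (lam : Fin n → ℂ) (b : ℕ) : (Fin n → ℂ) → Verma n h lam → Prop
  | base : Gv n h lam b lam (vv n h lam)
  | step (c : ℕ) (hc : c < b) (hcn : c < n - 1) (ν : Fin n → ℂ) (x : Verma n h lam) :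
      Gv n h lam b ν x → Gv n h lam b (wsh n ⟨c, hcn⟩ ν) (uFn n h c • x)

section GV
variable (n : ℕ) (h : ℂ) (lam : Fin n → ℂ)

lemma nmem_csmul (N : Submodule (UQ n h) (Verma n h lam)) (c : ℂ) {y : Verma n h lam}
    (hy : y ∈ N) : c • y ∈ N := by
  rw [← algebraMap_smul (UQ n h) c y]; exact N.smul_mem _ hy

lemma gv_hwt {b : ℕ} {ν : Fin n → ℂ} {x : Verma n h lam} (hg : Gv n h lam b ν x) :
    HWt n h lam ν x := by
  induction hg with
  | base => exact hwt_vv n h lam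
  | step c hc hcn ν x hx IH => exact hwt_uFn n h lam c hcn IH

lemma gv_mono {b b' : ℕ} (hbb : b ≤ b') {ν : Fin n → ℂ} {x : Verma n h lam}
    (hg : Gv n h lam b ν x) : Gv n h lam b' ν x := by
  induction hg with
  | base => exact Gv.base
  | step c hc hcn ν x hx IH => exact Gv.step c (by omega) hcn ν x IH

lemma gv_high {b : ℕ} {ν : Fin n → ℂ} {x : Verma n h lam} (hg : Gv n h lam b ν x) :
    ∀ i : Fin n, b < (i:ℕ) → ν i = lam i := by
  induction hg with
  | base => intro i _; rfl
  | step c hc hcn ν x hx IH =>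
      intro i hi
      rw [wsh_high n ⟨c, hcn⟩ ν i (by simp only; omega)]
      exact IH i hi

lemma gv_fcheck_mem (N : Submodule (UQ n h) (Verma n h lam)) (s jj b : ℕ) (hbs : b + 1 ≤ s)
    (hgen : fcheck n h s jj • vv n h lam ∈ N) {ν : Fin n → ℂ} {x : Verma n h lam}
    (hg : Gv n h lam b ν x) : fcheck n h s jj • x ∈ N := by
  induction hg with
  | base => exact hgen
  | step c hc hcn ν x hx IH =>
      rw [← mul_smul, fcheck_comm n h s jj c (by omega), mul_smul]
      exact N.smul_mem _ IH

lemma claimQ (N : Submodule (UQ n h) (Verma n h lam)) (s jj : ℕ)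
    (hsj : s < jj) (hjn : jj < n)
    (hkey : (((jj - s - 1 : ℕ) : ℂ))
        + (lam ⟨s, by omega⟩ - lam ⟨jj, hjn⟩) = 0)
    (hgen : fcheck n h s jj • vv n h lam ∈ N) :
    ∀ (t b : ℕ), b + t + 1 = s → ∀ (ν : Fin n → ℂ) (x : Verma n h lam),
      Gv n h lam b ν x → fcheck n h b jj • x ∈ N := by
  intro t
  induction t with
  | zero =>
      intro b hb ν x hg
      have hbs : b + 1 = s := by omega
      have hwx := gv_hwt n h lam hg
      rw [fcheck, dif_neg (by omega : ¬ jj ≤ b + 1), sub_smul]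
      have hb1n : b + 1 < n := by omega
      have hterm2 : Cc n h b jj (jj - b - 2) • x = 0 := by
        apply cc_smul_zero n h lam b jj (jj - b - 2) hb1n hjn hwx
        rw [gv_high n h lam hg ⟨b+1, hb1n⟩ (by simp), gv_high n h lam hg ⟨jj, hjn⟩ (by simp; omega)]
        have e1 : jj - b - 2 = jj - s - 1 := by omega
        have e2 : (⟨b+1, hb1n⟩ : Fin n) = ⟨s, by omega⟩ := by
          apply Fin.ext; simp [hbs]
        rw [e1, e2]
        exact hkey
      apply Submodule.sub_mem
      · obtain ⟨w, hw⟩ : ∃ w : ℂ, Cc n h b jj (jj - b - 1) • x = w • x :=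
          ⟨_, cc_smul n h lam b jj (jj - b - 1) hb1n hjn hwx⟩
        rw [mul_smul, mul_smul, hw, vsmul_comm]
        apply N.smul_mem
        apply nmem_csmul
        rw [hbs]
        exact gv_fcheck_mem n h lam N s jj b (by omega) hgen hg
      · rw [mul_smul, mul_smul, hterm2, smul_zero, smul_zero]
        exact N.zero_mem
  | succ t IH =>
      intro b hb ν x hg
      have hwx := gv_hwt n h lam hg
      have hb1n : b + 1 < n := by omega
      rw [fcheck, dif_neg (by omega : ¬ jj ≤ b + 1), sub_smul]
      apply Submodule.sub_mem
      · obtain ⟨w, hw⟩ : ∃ w : ℂ, Cc n h b jj (jj - b - 1) • x = w • x :=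
          ⟨_, cc_smul n h lam b jj (jj - b - 1) hb1n hjn hwx⟩
        rw [mul_smul, mul_smul, hw, vsmul_comm]
        apply N.smul_mem
        apply nmem_csmul
        exact IH (b+1) (by omega) ν x (gv_mono n h lam (by omega) hg)
      · obtain ⟨w, hw⟩ : ∃ w : ℂ, Cc n h b jj (jj - b - 2) • x = w • x :=
          ⟨_, cc_smul n h lam b jj (jj - b - 2) hb1n hjn hwx⟩
        rw [mul_smul, mul_smul, hw]
        have hbn1 : b < n - 1 := by omega
        have hstep : Gv n h lam (b+1) (wsh n ⟨b, hbn1⟩ ν) (uFn n h b • x) :=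
          Gv.step b (by omega) hbn1 ν x (gv_mono n h lam (by omega) hg)
        have hmem := IH (b+1) (by omega) _ _ hstep
        have : uFn n h b • w • x = w • (uFn n h b • x) := vsmul_comm n h lam w _ x
        rw [this, vsmul_comm]
        apply nmem_csmul
        exact hmem

lemma fcheck_mem_of (N : Submodule (UQ n h) (Verma n h lam)) (s jj : ℕ)
    (hsj : s < jj) (hjn : jj < n)
    (hkey : (((jj - s - 1 : ℕ) : ℂ)) + (lam ⟨s, by omega⟩ - lam ⟨jj, hjn⟩) = 0)
    (hgen : fcheck n h s jj • vv n h lam ∈ N) (a : ℕ) (ha : a ≤ s) :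
    fcheck n h a jj • vv n h lam ∈ N := by
  rcases Nat.eq_or_lt_of_le ha with he | hlt
  · rw [he]; exact hgen
  · exact claimQ n h lam N s jj hsj hjn hkey hgen (s - 1 - a) a (by omega) lam
      (vv n h lam) Gv.base

end GV

section Blocks
variable (k : ℕ) (nn : Fin k → ℕ)

lemma ost_zero (i : Fin k) (hi : (i:ℕ) = 0) : ost k nn i = 0 := by
  rw [ost]
  have : Finset.Iio i = ∅ := by
    ext a; simp [Finset.mem_Iio, Fin.lt_def, hi]
  rw [this, Finset.sum_empty]

lemma ost_succ (i : Fin k) (hi : (i:ℕ)+1 < k) :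
    ost k nn ⟨(i:ℕ)+1, hi⟩ = ost k nn i + nn i := by
  rw [ost, ost]
  have : Finset.Iio (⟨(i:ℕ)+1, hi⟩ : Fin k) = insert i (Finset.Iio i) := by
    ext a; simp [Finset.mem_Iio, Fin.lt_def, Fin.ext_iff]
  rw [this, Finset.sum_insert (by simp [Finset.mem_Iio])]
  ring

lemma ost_last (hk : 0 < k) :
    ost k nn ⟨k-1, by omega⟩ + nn ⟨k-1, by omega⟩ = ∑ i, nn i := by
  rw [ost]
  have : (Finset.univ : Finset (Fin k)) = insert ⟨k-1, by omega⟩ (Finset.Iio ⟨k-1, by omega⟩) := by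
    ext a
    have ha := a.isLt
    simp only [Finset.mem_univ, Finset.mem_insert, Finset.mem_Iio, true_iff, Fin.ext_iff,
      Fin.lt_def]
    omega
  rw [this, Finset.sum_insert (by simp [Finset.mem_Iio])]
  ring

lemma block_exists (hk : 0 < k) (p : ℕ) (hp : p < ∑ i, nn i) :
    ∃ i : Fin k, ost k nn i ≤ p ∧ p < ost k nn i + nn i := by
  classical
  set T : Finset (Fin k) := Finset.univ.filter (fun i => ost k nn i ≤ p) with hT
  have hne : T.Nonempty := by
    refine ⟨⟨0, hk⟩, ?_⟩
    simp [hT, ost_zero k nn ⟨0, hk⟩ rfl]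
  set i0 := T.max' hne with hi0
  have hmem : i0 ∈ T := T.max'_mem hne
  have hle : ost k nn i0 ≤ p := by simpa [hT] using hmem
  refine ⟨i0, hle, ?_⟩
  by_contra hcon
  push_neg at hcon
  by_cases hlast : (i0:ℕ) + 1 < k
  · have h1 : ost k nn ⟨(i0:ℕ)+1, hlast⟩ ≤ p := by
      rw [ost_succ k nn i0 hlast]; omega
    have h2 : (⟨(i0:ℕ)+1, hlast⟩ : Fin k) ∈ T := by simp [hT, h1]
    have h3 := T.le_max' _ h2
    rw [← hi0] at h3
    have : (i0:ℕ) + 1 ≤ (i0:ℕ) := by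
      have := (Fin.le_def).1 h3
      simpa using this
    omega
  · have hi0v : (i0:ℕ) = k - 1 := by have := i0.isLt; omega
    have he : i0 = ⟨k-1, by omega⟩ := Fin.ext hi0v
    rw [he] at hcon hle
    have := ost_last k nn hk
    omega

end Blocks

lemma bq_zero (h : ℂ) : bq h 0 = 0 := by simp [bq, qz_zero]

set_option maxHeartbeats 1600000 in
theorem projected_Mhat_vanishes (n k : ℕ) (hn : 2 ≤ n) (hk : 2 ≤ k) (nn : Fin k → ℕ)
    (hpos : ∀ i, 0 < nn i) (hsum : ∑ i, nn i = n) (h : ℂ) (hq : NotRootOfUnity (qh h))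
    (lam : Fin n → ℂ) (hconst : ∀ a b : Fin n, sameBlock n k nn a b → lam a = lam b)
    (σ : Equiv.Perm (Fin n)) (hσ : Admissible n k nn σ)
    (j : ℕ) (hjn : j < n)
    (hnot : ∀ (i' : Fin k) (p : Fin n), (p:ℕ) = ost k nn i' → ((σ p : Fin n) : ℕ) ≠ j) :
    Submodule.map (piMkQ n h (NSub n h k nn σ lam)) (Mhat n h (sdot n σ lam) j) = ⊥ := by
  classical
  set MU : Fin n → ℂ := sdot n σ lam with hMU
  set N : Submodule (UQ n h) (Verma n h MU) := NSub n h k nn σ lam with hN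
  set jF : Fin n := ⟨j, hjn⟩ with hjF
  set p : Fin n := σ⁻¹ jF with hp
  obtain ⟨i0, hle, hlt⟩ := block_exists k nn (by omega) (p:ℕ) (by rw [hsum]; exact p.isLt)
  have hostp : ost k nn i0 < (p:ℕ) := by
    rcases Nat.lt_or_ge (ost k nn i0) (p:ℕ) with hcase | hcase
    · exact hcase
    · exfalso
      refine hnot i0 p (by omega) ?_
      rw [hp, show σ (σ⁻¹ jF) = jF from σ.apply_symm_apply jF]
  have hp1 : 1 ≤ (p:ℕ) := by omega
  set pm : Fin n := ⟨(p:ℕ)-1, by omega⟩ with hpm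
  have hpmv : (pm:ℕ) = (p:ℕ) - 1 := rfl
  have hpn : (p:ℕ) < n := p.isLt
  have hpm1 : (pm:ℕ)+1 < n := by omega
  have hpmp : (⟨(pm:ℕ)+1, hpm1⟩ : Fin n) = p := by
    apply Fin.ext
    show (pm:ℕ)+1 = (p:ℕ)
    omega
  have hsb : sameBlock n k nn pm ⟨(pm:ℕ)+1, hpm1⟩ := by
    refine ⟨i0, ?_, ?_, ?_, ?_⟩
    · show ost k nn i0 ≤ (pm:ℕ); omega
    · show (pm:ℕ) < ost k nn i0 + nn i0; omega
    · show ost k nn i0 ≤ (pm:ℕ)+1; omega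
    · show (pm:ℕ)+1 < ost k nn i0 + nn i0; omega
  have hsbp : sameBlock n k nn pm p := by rw [← hpmp]; exact hsb
  set sF : Fin n := σ pm with hsF
  have hsigp : σ p = jF := by rw [hp, show σ (σ⁻¹ jF) = jF from σ.apply_symm_apply jF]
  have hsj : (sF:ℕ) < j := by
    have hlt2 : σ pm < σ p := by
      apply hσ pm p ?_ hsbp
      rw [Fin.lt_def]
      omega
    rw [hsigp] at hlt2
    exact (Fin.lt_def).1 hlt2
  have hgen : fcheck n h ((sF:ℕ)) j • vv n h MU ∈ N := by
    apply Submodule.subset_span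
    refine ⟨pm, hpm1, hsb, ?_⟩
    rw [hpmp, hsigp]
  have hsn : (sF:ℕ) < n := by omega
  have hc1 : ((j - (sF:ℕ) - 1 : ℕ) : ℂ) = (j:ℂ) - ((sF:ℕ):ℂ) - 1 := by
    rw [Nat.cast_sub (by omega), Nat.cast_sub (by omega), Nat.cast_one]
  have hkey : (((j - (sF:ℕ) - 1 : ℕ) : ℂ))
      + (MU ⟨(sF:ℕ), by omega⟩ - MU ⟨j, hjn⟩) = 0 := by
    have e1 : (⟨(sF:ℕ), by omega⟩ : Fin n) = sF := by apply Fin.ext; rfl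
    have e2 : (⟨j, hjn⟩ : Fin n) = jF := rfl
    rw [e1, e2, hMU]
    simp only [sdot]
    rw [hsF, show σ⁻¹ (σ pm) = pm from σ.symm_apply_apply pm, ← hp]
    have hlam : lam pm = lam p := hconst pm p hsbp
    have hc2 : (((pm:ℕ)):ℂ) = ((p:ℕ):ℂ) - 1 := by
      rw [hpmv, Nat.cast_sub hp1, Nat.cast_one]
    have hc3 : ((jF:ℕ):ℂ) = (j:ℂ) := by rw [hjF]
    rw [← hsF, hlam, hc1, hc2, hc3]
    ring
  -- each component of uhat lies in N
  have hcomp : ∀ a : Fin n, uhat n h MU j a ∈ N := by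
    intro a
    simp only [uhat]
    split_ifs with haj
    · by_cases has : (a:ℕ) ≤ (sF:ℕ)
      · rw [fcheckE, if_neg (by omega : ¬ (a:ℕ) = j)]
        exact nmem_csmul n h MU N _
          (fcheck_mem_of n h MU N (sF:ℕ) j hsj hjn hkey hgen (a:ℕ) has)
      · have hfac : bq h (lamn n MU (sF:ℕ) - lamn n MU j + (j:ℂ) - ((sF:ℕ):ℂ) - 1) = 0 := by
          have h1 : lamn n MU (sF:ℕ) = MU ⟨(sF:ℕ), hsn⟩ := by
            simp only [lamn]; rw [dif_pos hsn]
          have h2 : lamn n MU j = MU ⟨j, hjn⟩ := by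
            simp only [lamn]; rw [dif_pos hjn]
          rw [h1, h2]
          have h0 : MU ⟨(sF:ℕ), hsn⟩ - MU ⟨j, hjn⟩ + (j:ℂ) - ((sF:ℕ):ℂ) - 1 = 0 := by
            rw [hc1] at hkey
            linear_combination hkey
          rw [h0, bq_zero]
        have hz : coefu n h MU j (a:ℕ) = 0 := by
          rw [coefu]
          have hsmem : (sF:ℕ) ∈ Finset.range (a:ℕ) := Finset.mem_range.2 (by omega)
          rw [Finset.prod_eq_zero hsmem hfac, mul_zero]
        rw [hz, vzero_smul]
        exact N.zero_mem
    · exact N.zero_mem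
  -- the kernel submodule
  set W0 : Submodule ℂ (Fin n → Verma n h MU) :=
    Submodule.pi Set.univ (fun _ => N.restrictScalars ℂ) with hW0
  have hW0mem : ∀ u : Fin n → Verma n h MU, u ∈ W0 ↔ ∀ a, u a ∈ N := by
    intro u
    rw [hW0, Submodule.mem_pi]
    exact ⟨fun hu a => hu a (Set.mem_univ a), fun hu a _ => hu a⟩
  have hMle : Mhat n h MU j ≤ W0 := by
    apply sInf_le
    refine ⟨(hW0mem _).2 hcomp, ?_, ?_, ?_, ?_⟩
    · intro kk u hu
      have hu' := (hW0mem _).1 hu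
      refine (hW0mem _).2 (fun a => ?_)
      simp only [Etens]
      apply Submodule.add_mem
      · split_ifs with hc
        · exact hu' _
        · exact N.zero_mem
      · exact nmem_csmul n h MU N _ (N.smul_mem _ (hu' a))
    · intro kk u hu
      have hu' := (hW0mem _).1 hu
      refine (hW0mem _).2 (fun a => ?_)
      simp only [Ftens]
      apply Submodule.add_mem
      · exact N.smul_mem _ (hu' a)
      · split_ifs with hc
        · exact N.smul_mem _ (hu' _)
        · exact N.zero_mem
    · intro i u hu
      have hu' := (hW0mem _).1 hu
      refine (hW0mem _).2 (fun a => ?_)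
      simp only [Ktens]
      exact nmem_csmul n h MU N _ (N.smul_mem _ (hu' a))
    · intro i u hu
      have hu' := (hW0mem _).1 hu
      refine (hW0mem _).2 (fun a => ?_)
      simp only [Kinvtens]
      exact nmem_csmul n h MU N _ (N.smul_mem _ (hu' a))
  rw [eq_bot_iff]
  rintro y hy
  obtain ⟨u, hu, rfl⟩ := Submodule.mem_map.1 hy
  rw [Submodule.mem_bot]
  have huN := (hW0mem u).1 (hMle hu)
  funext a
  show Submodule.Quotient.mk (u a) = 0
  exact (Submodule.Quotient.mk_eq_zero N).2 (huN a)

end QGL
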